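/- Let (M,g) be a Riemannian manifold with sec ≤ 1 and γ: [0,r] → M a unit-speed geodesic with r ≥ π. Let E be a unit parallel field along γ perpendicular to γ'. If ∫₀^r sec(γ'(t), E(t)) dt > π, then the second variation of energy of γ in the direction of the proper variation field φE is negative, where φ(t) = sin(t) on [0,π/2], 1 on [π/2,r−π/2], −sin(t−r) on [r−π/2,r]. -/

import Mathlib

open MeasureTheory intervalIntegral Set


/-- Lemma 4.1 (index estimate): along a unit-speed geodesic `γ` of length
`r ≥ π` in a manifold with `sec ≤ 1`, if `E` is a unit parallel field
perpendicular to `γ'` with `∫₀^r sec(γ', E) dt > π`, then the second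
variation of energy in the direction of the proper variation field `φE` is
negative.  Here `k t = sec(γ'(t), E(t))` is the sectional curvature of the
plane spanned by `γ'` and `E` along `γ`, and the second variation of energy
for the variation field `φE` along a geodesic is
`∫₀^r ((φ')² − φ² sec(γ',E)) dt`. -/
theorem stmt_14 (r : ℝ) (hr : Real.pi ≤ r)
    (k : ℝ → ℝ)  -- k t = sec(γ'(t), E(t))
    (hk_cont : ContinuousOn k (Set.Icc 0 r))
    (hk_le : ∀ t ∈ Set.Icc (0 : ℝ) r, k t ≤ 1)  -- sec ≤ 1
    (φ : ℝ → ℝ)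
    (hφ : ∀ t, φ t = if t ≤ Real.pi / 2 then Real.sin t
      else if t ≤ r - Real.pi / 2 then 1 else -Real.sin (t - r))
    (hint : Real.pi < ∫ t in (0 : ℝ)..r, k t) :
    (∫ t in (0 : ℝ)..r, ((deriv φ t) ^ 2 - (φ t) ^ 2 * k t)) < 0 := by
  have hπ : (0:ℝ) < Real.pi := Real.pi_pos
  set p : ℝ := Real.pi / 2 with hpdef
  set q : ℝ := r - Real.pi / 2 with hqdef
  have hp0 : (0:ℝ) < p := by positivity
  have hpq : p ≤ q := by simp only [hpdef, hqdef]; linarith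
  have hqr : q ≤ r := by simp only [hqdef]; linarith
  have hsp : Real.sin p = 1 := Real.sin_pi_div_two
  have hcp : Real.cos p = 0 := Real.cos_pi_div_two
  -- explicit derivative
  set ψ : ℝ → ℝ := fun t => if t ≤ p then Real.cos t else if t ≤ q then 0
      else -Real.cos (t - r) with hψdef
  -- piecewise formulas on closed intervals
  have hφ1 : ∀ t ∈ Icc (0:ℝ) p, φ t = Real.sin t := fun t ht => by
    rw [hφ, if_pos ht.2]
  have hφ2 : ∀ t ∈ Icc p q, φ t = 1 := by
    intro t ht
    by_cases h : t ≤ p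
    · have : t = p := le_antisymm h ht.1
      rw [hφ, if_pos h, this, hsp]
    · rw [hφ, if_neg h, if_pos ht.2]
  have hφ3 : ∀ t ∈ Icc q r, φ t = -Real.sin (t - r) := by
    intro t ht
    by_cases h : t ≤ p
    · have htp : t = p := le_antisymm h (hpq.trans ht.1)
      have hqp : q = p := le_antisymm (ht.1.trans h) hpq
      have hrπ : r = Real.pi := by
        simp only [hqdef, hpdef] at hqp; linarith
      rw [hφ, if_pos h, htp, hrπ]
      have : p - Real.pi = -p := by simp only [hpdef]; ring
      rw [this, Real.sin_neg, hsp]; ring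
    · by_cases h2 : t ≤ q
      · have htq : t = q := le_antisymm h2 ht.1
        rw [hφ, if_neg h, if_pos h2, htq]
        have : q - r = -p := by simp only [hqdef]; ring
        rw [this, Real.sin_neg, hsp]; ring
      · rw [hφ, if_neg h, if_neg h2]
  have hψ1 : ∀ t ∈ Icc (0:ℝ) p, ψ t = Real.cos t := fun t ht => by
    simp only [hψdef]; rw [if_pos ht.2]
  have hψ2 : ∀ t ∈ Icc p q, ψ t = 0 := by
    intro t ht
    by_cases h : t ≤ p
    · have : t = p := le_antisymm h ht.1
      simp only [hψdef]; rw [if_pos h, this, hcp]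
    · simp only [hψdef]; rw [if_neg h, if_pos ht.2]
  have hψ3 : ∀ t ∈ Icc q r, ψ t = -Real.cos (t - r) := by
    intro t ht
    by_cases h : t ≤ p
    · have htp : t = p := le_antisymm h (hpq.trans ht.1)
      have hrπ : r = Real.pi := by
        have hqp : q = p := le_antisymm (ht.1.trans h) hpq
        simp only [hqdef, hpdef] at hqp; linarith
      simp only [hψdef]; rw [if_pos h, htp, hrπ]
      have : p - Real.pi = -p := by simp only [hpdef]; ring
      rw [this, Real.cos_neg, hcp]; ring
    · by_cases h2 : t ≤ q
      · have htq : t = q := le_antisymm h2 ht.1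
        simp only [hψdef]; rw [if_neg h, if_pos h2, htq]
        have : q - r = -p := by simp only [hqdef]; ring
        rw [this, Real.cos_neg, hcp]; ring
      · simp only [hψdef]; rw [if_neg h, if_neg h2]
  -- deriv φ = ψ away from {p, q}
  have hderiv : ∀ t : ℝ, t ≠ p → t ≠ q → deriv φ t = ψ t := by
    intro t hp' hq'
    rcases lt_trichotomy t p with h | h | h
    · have hev : φ =ᶠ[nhds t] Real.sin := by
        filter_upwards [Iio_mem_nhds h] with s hs
        rw [hφ, if_pos hs.le]
      rw [hev.deriv_eq, Real.deriv_sin]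
      simp only [hψdef]; rw [if_pos h.le]
    · exact absurd h hp'
    · rcases lt_trichotomy t q with h2 | h2 | h2
      · have hev : φ =ᶠ[nhds t] (fun _ => (1:ℝ)) := by
          filter_upwards [Ioo_mem_nhds h h2] with s hs
          rw [hφ, if_neg (not_le.mpr hs.1), if_pos hs.2.le]
        rw [hev.deriv_eq, deriv_const]
        simp only [hψdef]
        rw [if_neg (not_le.mpr h), if_pos h2.le]
      · exact absurd h2 hq'
      · have hev : φ =ᶠ[nhds t] (fun s => -Real.sin (s - r)) := by
          filter_upwards [Ioi_mem_nhds h2] with s hs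
          rw [hφ, if_neg (not_le.mpr (lt_of_le_of_lt hpq hs)),
            if_neg (not_le.mpr hs)]
        rw [hev.deriv_eq]
        have hd : HasDerivAt (fun s => -Real.sin (s - r)) (-Real.cos (t - r)) t := by
          have := ((Real.hasDerivAt_sin (t - r)).comp t
            ((hasDerivAt_id t).sub_const r)).neg
          exact this.congr_deriv (by simp)
        rw [hd.deriv]
        simp only [hψdef]
        rw [if_neg (not_le.mpr (lt_of_le_of_lt hpq h2)), if_neg (not_le.mpr h2)]
  -- subset facts
  have hsub1 : Icc (0:ℝ) p ⊆ Icc 0 r := Icc_subset_Icc le_rfl (hpq.trans hqr)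
  have hsub2 : Icc p q ⊆ Icc 0 r := Icc_subset_Icc hp0.le hqr
  have hsub3 : Icc q r ⊆ Icc 0 r := Icc_subset_Icc (hp0.le.trans hpq) le_rfl
  -- integrability of k on the pieces
  have hk1 : IntervalIntegrable k volume 0 p := by
    apply ContinuousOn.intervalIntegrable
    rw [uIcc_of_le hp0.le]; exact hk_cont.mono hsub1
  have hk2 : IntervalIntegrable k volume p q := by
    apply ContinuousOn.intervalIntegrable
    rw [uIcc_of_le hpq]; exact hk_cont.mono hsub2
  have hk3 : IntervalIntegrable k volume q r := by
    apply ContinuousOn.intervalIntegrable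
    rw [uIcc_of_le hqr]; exact hk_cont.mono hsub3
  -- the explicit integrand
  set f : ℝ → ℝ := fun t => ψ t ^ 2 - φ t ^ 2 * k t with hfdef
  -- f equals nice continuous functions on each closed piece
  set g1 : ℝ → ℝ := fun t => Real.cos t ^ 2 - Real.sin t ^ 2 * k t with hg1def
  set g2 : ℝ → ℝ := fun t => -k t with hg2def
  set g3 : ℝ → ℝ := fun t => Real.cos (t - r) ^ 2 - Real.sin (t - r) ^ 2 * k t
    with hg3def
  have hfg1 : EqOn f g1 (Icc 0 p) := fun x hx => by
    simp only [hfdef, hg1def]; rw [hψ1 x hx, hφ1 x hx]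
  have hfg2 : EqOn f g2 (Icc p q) := fun x hx => by
    simp only [hfdef, hg2def]; rw [hψ2 x hx, hφ2 x hx]; ring
  have hfg3 : EqOn f g3 (Icc q r) := fun x hx => by
    simp only [hfdef, hg3def]; rw [hψ3 x hx, hφ3 x hx]; ring
  have hg1c : ContinuousOn g1 (Icc 0 p) :=
    ((Real.continuous_cos.pow 2).continuousOn).sub
      (((Real.continuous_sin.pow 2).continuousOn).mul (hk_cont.mono hsub1))
  have hg2c : ContinuousOn g2 (Icc p q) := (hk_cont.mono hsub2).neg
  have hg3c : ContinuousOn g3 (Icc q r) :=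
    (((Real.continuous_cos.comp (continuous_id.sub continuous_const)).pow
      2).continuousOn).sub
      ((((Real.continuous_sin.comp (continuous_id.sub continuous_const)).pow
        2).continuousOn).mul (hk_cont.mono hsub3))
  have hI1 : IntervalIntegrable f volume 0 p := by
    apply ContinuousOn.intervalIntegrable
    rw [uIcc_of_le hp0.le]; exact hg1c.congr hfg1
  have hI2 : IntervalIntegrable f volume p q := by
    apply ContinuousOn.intervalIntegrable
    rw [uIcc_of_le hpq]; exact hg2c.congr hfg2
  have hI3 : IntervalIntegrable f volume q r := by
    apply ContinuousOn.intervalIntegrable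
    rw [uIcc_of_le hqr]; exact hg3c.congr hfg3
  -- step 1 : replace deriv φ by ψ
  have hstep1 : (∫ t in (0:ℝ)..r, ((deriv φ t) ^ 2 - (φ t) ^ 2 * k t))
      = ∫ t in (0:ℝ)..r, f t := by
    apply intervalIntegral.integral_congr_ae
    have hae : ∀ᵐ x : ℝ, x ∉ ({p, q} : Set ℝ) :=
      measure_eq_zero_iff_ae_notMem.1 ((Set.toFinite _).measure_zero volume)
    filter_upwards [hae] with x hx _
    have hxp : x ≠ p := fun h => hx (by simp [h])
    have hxq : x ≠ q := fun h => hx (by simp [h])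
    simp only [hfdef]; rw [hderiv x hxp hxq]
  -- step 2 : split the integral
  have hsplit : (∫ t in (0:ℝ)..r, f t)
      = (∫ t in (0:ℝ)..p, f t) + (∫ t in p..q, f t) + ∫ t in q..r, f t := by
    rw [intervalIntegral.integral_add_adjacent_intervals hI1 hI2,
      intervalIntegral.integral_add_adjacent_intervals (hI1.trans hI2) hI3]
  have hksplit : (∫ t in (0:ℝ)..r, k t)
      = (∫ t in (0:ℝ)..p, k t) + (∫ t in p..q, k t) + ∫ t in q..r, k t := by
    rw [intervalIntegral.integral_add_adjacent_intervals hk1 hk2,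
      intervalIntegral.integral_add_adjacent_intervals (hk1.trans hk2) hk3]
  -- rewrite the pieces with the explicit formulas
  have he1 : (∫ t in (0:ℝ)..p, f t) = ∫ t in (0:ℝ)..p, g1 t :=
    intervalIntegral.integral_congr (by rwa [uIcc_of_le hp0.le])
  have he2 : (∫ t in p..q, f t) = -∫ t in p..q, k t := by
    rw [intervalIntegral.integral_congr (g := g2) (by rwa [uIcc_of_le hpq])]
    simp only [hg2def]; exact intervalIntegral.integral_neg
  have he3 : (∫ t in q..r, f t) = ∫ t in q..r, g3 t :=
    intervalIntegral.integral_congr (by rwa [uIcc_of_le hqr])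
  -- bound the first piece
  have hb1 : (∫ t in (0:ℝ)..p, g1 t)
      ≤ ∫ t in (0:ℝ)..p, (2 * Real.cos t ^ 2 - k t) := by
    apply intervalIntegral.integral_mono_on hp0.le
    · apply ContinuousOn.intervalIntegrable
      rw [uIcc_of_le hp0.le]; exact hg1c
    · exact ((continuous_const.mul (Real.continuous_cos.pow 2)).intervalIntegrable 0 p).sub hk1
    · intro x hx
      have hkx := hk_le x (hsub1 hx)
      simp only [hg1def]
      nlinarith [Real.sin_sq_add_cos_sq x, sq_nonneg (Real.sin x)]
  have hc1 : (∫ t in (0:ℝ)..p, (2 * Real.cos t ^ 2 - k t))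
      = p - ∫ t in (0:ℝ)..p, k t := by
    rw [intervalIntegral.integral_sub
      ((by fun_prop : Continuous fun t : ℝ => 2 * Real.cos t ^ 2).intervalIntegrable 0 p) hk1,
      intervalIntegral.integral_const_mul, integral_cos_sq]
    rw [hcp, Real.sin_zero]; ring
  -- bound the last piece
  have hb3 : (∫ t in q..r, g3 t)
      ≤ ∫ t in q..r, (2 * Real.cos (t - r) ^ 2 - k t) := by
    apply intervalIntegral.integral_mono_on hqr
    · apply ContinuousOn.intervalIntegrable
      rw [uIcc_of_le hqr]; exact hg3c
    · exact (((by fun_prop : Continuous fun t : ℝ => 2 * Real.cos (t - r) ^ 2)).intervalIntegrable q r).sub hk3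
    · intro x hx
      have hkx := hk_le x (hsub3 hx)
      simp only [hg3def]
      nlinarith [Real.sin_sq_add_cos_sq (x - r), sq_nonneg (Real.sin (x - r))]
  have hc3 : (∫ t in q..r, (2 * Real.cos (t - r) ^ 2 - k t))
      = p - ∫ t in q..r, k t := by
    rw [intervalIntegral.integral_sub (((by fun_prop : Continuous fun t : ℝ => 2 * Real.cos (t - r) ^ 2)).intervalIntegrable q r) hk3]
    have : (∫ t in q..r, 2 * Real.cos (t - r) ^ 2)
        = ∫ t in (q - r)..(r - r), 2 * Real.cos t ^ 2 :=
      intervalIntegral.integral_comp_sub_right (fun u => 2 * Real.cos u ^ 2) r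
    rw [this]
    have hqrr : q - r = -p := by simp only [hqdef, hpdef]; ring
    rw [hqrr, sub_self, intervalIntegral.integral_const_mul, integral_cos_sq]
    rw [Real.cos_neg, Real.sin_neg, hcp, Real.sin_zero]; ring
  -- put everything together
  have h2p : 2 * p = Real.pi := by simp only [hpdef]; ring
  calc (∫ t in (0:ℝ)..r, ((deriv φ t) ^ 2 - (φ t) ^ 2 * k t))
      = (∫ t in (0:ℝ)..p, f t) + (∫ t in p..q, f t) + ∫ t in q..r, f t := by
        rw [hstep1, hsplit]
    _ ≤ (p - ∫ t in (0:ℝ)..p, k t) + (-∫ t in p..q, k t)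
        + (p - ∫ t in q..r, k t) := by
        rw [he1, he2, he3]
        have := hb1.trans_eq hc1
        have := hb3.trans_eq hc3
        linarith
    _ < 0 := by rw [hksplit] at hint; linarith
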